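/- For every integer d ≥ 1 and every even integer p ≥ 2, the coefficient D(d,p) := (d−1)! · d^{p/2} · (d+1)^{p/2} / (p+d−1)! satisfies 1 − p(p−2)/(2d) ≤ D(d,p) ≤ 1. -/

import Mathlib

open Finset

private lemma asc_eq_prod (d : ℕ) : ∀ k : ℕ, d.ascFactorial k = ∏ i ∈ range k, (d + i)
  | 0 => by simp
  | k + 1 => by
    rw [Nat.ascFactorial_succ, prod_range_succ, asc_eq_prod d k, mul_comm]

private lemma weier (m : ℕ) (f : ℕ → ℝ) (h0 : ∀ i, 0 ≤ f i) (h1 : ∀ i, f i ≤ 1) :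
    1 - ∑ i ∈ range m, (1 - f i) ≤ ∏ i ∈ range m, f i := by
  induction m with
  | zero => simp
  | succ n ih =>
    rw [Finset.sum_range_succ, Finset.prod_range_succ]
    have hP0 : (0:ℝ) ≤ ∏ i ∈ range n, f i := Finset.prod_nonneg fun i _ => h0 i
    have hP1 : (∏ i ∈ range n, f i) ≤ 1 :=
      Finset.prod_le_one (fun i _ => h0 i) (fun i _ => h1 i)
    nlinarith [h0 n, h1 n]

private lemma prod_pair (d m : ℕ) :
    ∏ i ∈ range (2 * m), ((d : ℝ) + i) =
      ∏ i ∈ range m, (((d : ℝ) + 2 * i) * ((d : ℝ) + 2 * i + 1)) := by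
  induction m with
  | zero => simp
  | succ n ih =>
    have h : 2 * (n + 1) = (2 * n) + 1 + 1 := by ring
    rw [h, prod_range_succ, prod_range_succ, ih, prod_range_succ]
    push_cast
    ring

/-- **Statement 8.** For every integer `d ≥ 1` and every even integer `p ≥ 2`, the
coefficient `D(d,p) := (d−1)!·d^{p/2}·(d+1)^{p/2}/(p+d−1)!` satisfies
`1 − p(p−2)/(2d) ≤ D(d,p) ≤ 1`. -/
theorem D_coeff_bounds_even (d p : ℕ) (hd : 1 ≤ d) (hp : 2 ≤ p) (hpe : Even p) :
    1 - (p : ℝ) * ((p : ℝ) - 2) / (2 * d)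
        ≤ ((d - 1).factorial : ℝ) * (d : ℝ) ^ (p / 2) * ((d : ℝ) + 1) ^ (p / 2)
            / ((p + d - 1).factorial : ℝ) ∧
      ((d - 1).factorial : ℝ) * (d : ℝ) ^ (p / 2) * ((d : ℝ) + 1) ^ (p / 2)
          / ((p + d - 1).factorial : ℝ) ≤ 1 := by
  obtain ⟨m, hm⟩ := hpe
  have hp2m : p = 2 * m := by omega
  have hpm : p / 2 = m := by omega
  have hm1 : 1 ≤ m := by omega
  have hd1 : (1:ℝ) ≤ (d:ℝ) := by exact_mod_cast hd
  have hdpos : (0:ℝ) < (d:ℝ) := by linarith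
  -- factorial identity
  have hfnat : (d - 1).factorial * d.ascFactorial p = (p + d - 1).factorial := by
    rw [Nat.factorial_mul_ascFactorial' d p hd]
    congr 1
    omega
  have hfact : ((p + d - 1).factorial : ℝ)
      = ((d - 1).factorial : ℝ) * ∏ i ∈ range p, ((d : ℝ) + i) := by
    rw [← hfnat]
    push_cast [asc_eq_prod]
    ring
  set r : ℕ → ℝ := fun i => (d : ℝ) * ((d : ℝ) + 1) / (((d : ℝ) + 2 * i) * ((d : ℝ) + 2 * i + 1))
    with hr
  have hden : ∀ i : ℕ, (0:ℝ) < ((d : ℝ) + 2 * i) * ((d : ℝ) + 2 * i + 1) := by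
    intro i
    have : (0:ℝ) ≤ (i:ℝ) := Nat.cast_nonneg i
    positivity
  have hr0 : ∀ i : ℕ, 0 ≤ r i := by
    intro i
    have := hden i
    positivity
  have hr1 : ∀ i : ℕ, r i ≤ 1 := by
    intro i
    rw [hr]
    rw [div_le_one (hden i)]
    have : (0:ℝ) ≤ (i:ℝ) := Nat.cast_nonneg i
    nlinarith
  -- express D as a product
  have hfacpos : (0:ℝ) < ((d - 1).factorial : ℝ) := by
    exact_mod_cast (d - 1).factorial_pos
  have hprodpos : (0:ℝ) < ∏ i ∈ range p, ((d : ℝ) + i) := by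
    apply Finset.prod_pos
    intro i _
    have : (0:ℝ) ≤ (i:ℝ) := Nat.cast_nonneg i
    linarith
  have hD : ((d - 1).factorial : ℝ) * (d : ℝ) ^ (p / 2) * ((d : ℝ) + 1) ^ (p / 2)
      / ((p + d - 1).factorial : ℝ) = ∏ i ∈ range m, r i := by
    rw [hfact, hpm]
    rw [hp2m, prod_pair d m]
    rw [hr]
    rw [Finset.prod_div_distrib]
    rw [Finset.prod_const]
    rw [mul_pow]
    have h2 : (0:ℝ) < ∏ i ∈ range m, (((d : ℝ) + 2 * i) * ((d : ℝ) + 2 * i + 1)) := by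
      apply Finset.prod_pos; intro i _; exact hden i
    simp only [Finset.card_range]
    field_simp
  rw [hD]
  constructor
  · -- lower bound
    have hw := weier m r hr0 hr1
    have hsum : ∑ i ∈ range m, (1 - r i) ≤ (p : ℝ) * ((p : ℝ) - 2) / (2 * d) := by
      have hterm : ∀ i ∈ range m, 1 - r i ≤ 4 * (i : ℝ) / d := by
        intro i _
        have hi : (0:ℝ) ≤ (i:ℝ) := Nat.cast_nonneg i
        have h1 : 1 - 4 * (i : ℝ) / d ≤ r i := by
          rw [hr]
          show 1 - 4 * (i : ℝ) / d
              ≤ (d : ℝ) * ((d : ℝ) + 1) / (((d : ℝ) + 2 * i) * ((d : ℝ) + 2 * i + 1))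
          rw [le_div_iff₀ (hden i)]
          have e : (1 : ℝ) - 4 * (i : ℝ) / d = ((d : ℝ) - 4 * i) / d := by
            field_simp
          rw [e, div_mul_eq_mul_div, div_le_iff₀ hdpos]
          nlinarith [hi, hdpos, mul_nonneg hi hi, mul_nonneg (mul_nonneg hi hi) hi,
            mul_nonneg hi hdpos.le]
        linarith
      have := Finset.sum_le_sum hterm
      have hgauss : (∑ i ∈ range m, (i : ℝ)) = (m : ℝ) * ((m : ℝ) - 1) / 2 := by
        have h := Finset.sum_range_id_mul_two m
        have : ((∑ i ∈ range m, i) : ℝ) * 2 = (m : ℝ) * ((m : ℝ) - 1) := by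
          have hc : ((m * (m - 1) : ℕ) : ℝ) = (m : ℝ) * ((m : ℝ) - 1) := by
            push_cast [Nat.cast_sub hm1]
            ring
          rw [← hc, ← h]; push_cast; ring
        push_cast at this ⊢
        linarith
      have hsum4 : ∑ i ∈ range m, 4 * (i : ℝ) / d = (p : ℝ) * ((p : ℝ) - 2) / (2 * d) := by
        rw [← Finset.sum_div, ← Finset.mul_sum, hgauss, hp2m]
        push_cast
        field_simp
        ring
      linarith [this, hsum4.le, hsum4.ge]
    linarith
  · exact Finset.prod_le_one (fun i _ => hr0 i) (fun i _ => hr1 i)
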